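/- Suppose G : (0,T] × ℝ^d × ℝ^d → ℝ satisfies 0 ≤ G(t,x,y) ≤ C₁ t^{−d/2} exp(−C₂|x−y|²/t) for all t ∈ (0,T] and x,y ∈ ℝ^d, with C₁, C₂ > 0. Then with ρ(x) = 1/(1+|x|^r), r > 0, there exists C(r,T) > 0 such that ∫_{ℝ^d} G(t,x,y) ρ(y) dy ≤ C(r,T) ρ(x) for all t ∈ (0,T] and x ∈ ℝ^d. -/

import Mathlib

open Real MeasureTheory

lemma aux_rpow_le (r c : ℝ) (hr : 0 < r) (hc : 0 < c) {s : ℝ} (hs : 0 ≤ s) :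
    s ^ r ≤ Real.exp (r/2 + r/2 * Real.log (r/c)) * Real.exp (c/2 * s^2) := by
  rcases eq_or_lt_of_le hs with h | h
  · rw [← h, Real.zero_rpow hr.ne']
    positivity
  · rw [← Real.exp_log (Real.rpow_pos_of_pos h r), Real.log_rpow h, ← Real.exp_add]
    apply Real.exp_le_exp.2
    set lam := Real.sqrt (c / r) with hlam
    have hlam0 : 0 < lam := Real.sqrt_pos.2 (by positivity)
    have h1 : Real.log (lam * s) ≤ ((lam*s)^2 + 1)/2 := by
      have := Real.log_le_sub_one_of_pos (by positivity : 0 < lam * s)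
      nlinarith [sq_nonneg (lam * s - 1)]
    have h2 : Real.log (lam * s) = Real.log lam + Real.log s :=
      Real.log_mul hlam0.ne' h.ne'
    have h3 : lam ^ 2 = c / r := Real.sq_sqrt (by positivity)
    have h4 : Real.log lam = -(1/2) * Real.log (r / c) := by
      rw [hlam, Real.log_sqrt (by positivity), Real.log_div hc.ne' hr.ne',
        Real.log_div hr.ne' hc.ne']
      ring
    have h5 : (lam * s)^2 = c / r * s^2 := by rw [mul_pow, h3]
    have h6 : Real.log s ≤ (c / r * s^2 + 1)/2 + (1/2) * Real.log (r/c) := by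
      nlinarith [h1, h2, h4, h5]
    have h7 : r * Real.log s ≤ r * ((c / r * s^2 + 1)/2 + (1/2) * Real.log (r/c)) :=
      mul_le_mul_of_nonneg_left h6 hr.le
    have h8 : r * ((c / r * s^2 + 1)/2 + (1/2) * Real.log (r/c))
        = r/2 + r/2 * Real.log (r/c) + c/2 * s^2 := by
      field_simp
      ring
    linarith

lemma gauss_int (d : ℕ) {b : ℝ} (hb : 0 < b) :
    Integrable (fun u : EuclideanSpace ℝ (Fin d) => Real.exp (-b * ‖u‖^2)) := by
  have h := GaussianFourier.integrable_cexp_neg_mul_sq_norm_add (V := EuclideanSpace ℝ (Fin d))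
      (b := (b:ℂ)) (by simpa using hb) 0 0
  have h2 := h.norm
  refine h2.congr ?_
  filter_upwards with v
  simp [Complex.norm_exp, ← Complex.ofReal_pow]

lemma phi_integrable (d : ℕ) (r a c : ℝ) (hr : 0 < r) (ha : 0 ≤ a) (hc : 0 < c) :
    Integrable (fun u : EuclideanSpace ℝ (Fin d) =>
      (1 + a * ‖u‖ ^ r) * Real.exp (-c * ‖u‖^2)) := by
  set K := Real.exp (r/2 + r/2 * Real.log (r/c)) with hK_def
  have hK : 0 < K := Real.exp_pos _
  have base := ((gauss_int d (half_pos hc)).const_mul (1 + a * K))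
  refine base.mono' ?_ ?_
  · apply Continuous.aestronglyMeasurable
    have hrc : Continuous fun s : ℝ => s ^ r := by
      rw [continuous_iff_continuousAt]
      intro s
      exact Real.continuousAt_rpow_const s r (Or.inr hr.le)
    exact (continuous_const.add (continuous_const.mul (hrc.comp continuous_norm))).mul
      (Real.continuous_exp.comp (continuous_const.mul (continuous_norm.pow 2)))
  · filter_upwards with u
    rw [Real.norm_eq_abs, abs_of_nonneg (by positivity)]
    have h1 : ‖u‖ ^ r ≤ K * Real.exp (c/2 * ‖u‖^2) := aux_rpow_le r c hr hc (norm_nonneg u)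
    have e1 : Real.exp (-c * ‖u‖^2) ≤ Real.exp (-(c/2) * ‖u‖^2) := by
      apply Real.exp_le_exp.2
      nlinarith [sq_nonneg ‖u‖]
    have e2 : Real.exp (c/2 * ‖u‖^2) * Real.exp (-c * ‖u‖^2) = Real.exp (-(c/2) * ‖u‖^2) := by
      rw [← Real.exp_add]
      ring_nf
    have p1 : (0:ℝ) ≤ ‖u‖ ^ r := Real.rpow_nonneg (norm_nonneg u) r
    have p2 : (0:ℝ) < Real.exp (-c * ‖u‖^2) := Real.exp_pos _
    have p3 : (0:ℝ) < Real.exp (-(c/2) * ‖u‖^2) := Real.exp_pos _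
    have key : ‖u‖ ^ r * Real.exp (-c * ‖u‖^2) ≤ K * Real.exp (-(c/2) * ‖u‖^2) := by
      calc ‖u‖ ^ r * Real.exp (-c * ‖u‖^2)
          ≤ (K * Real.exp (c/2 * ‖u‖^2)) * Real.exp (-c * ‖u‖^2) :=
            mul_le_mul_of_nonneg_right h1 p2.le
        _ = K * (Real.exp (c/2 * ‖u‖^2) * Real.exp (-c * ‖u‖^2)) := mul_assoc _ _ _
        _ = K * Real.exp (-(c/2) * ‖u‖^2) := by rw [e2]
    nlinarith [mul_le_mul_of_nonneg_left key ha]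

lemma peetre (r : ℝ) (hr : 0 < r) {a b c : ℝ} (ha : 0 ≤ a) (hb : 0 ≤ b) (hc : 0 ≤ c)
    (habc : c ≤ a + b) :
    1 + c ^ r ≤ 2 ^ r * (1 + a ^ r) * (1 + b ^ r) := by
  have pa : (0:ℝ) ≤ a ^ r := Real.rpow_nonneg ha r
  have pb : (0:ℝ) ≤ b ^ r := Real.rpow_nonneg hb r
  have h3 : (1:ℝ) ≤ 2 ^ r := by
    rw [show (1:ℝ) = 2 ^ (0:ℝ) by simp]
    exact Real.rpow_le_rpow_of_exponent_le one_le_two hr.le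
  have h1 : c ^ r ≤ (a + b) ^ r := Real.rpow_le_rpow hc habc hr.le
  have h2 : (a + b) ^ r ≤ 2 ^ r * (a ^ r + b ^ r) := by
    have hm : a + b ≤ 2 * max a b := by
      rcases le_total a b with h | h
      · rw [max_eq_right h]; linarith
      · rw [max_eq_left h]; linarith
    have hmx : (0:ℝ) ≤ max a b := le_max_of_le_left ha
    have h4 : (a+b)^r ≤ (2 * max a b)^r := Real.rpow_le_rpow (by linarith) hm hr.le
    rw [Real.mul_rpow (by norm_num) hmx] at h4
    have hmax : (max a b) ^ r ≤ a ^ r + b ^ r := by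
      rcases le_total a b with h | h
      · rw [max_eq_right h]; linarith
      · rw [max_eq_left h]; linarith
    nlinarith
  nlinarith [mul_nonneg pa pb]

/-- Gaussian-dominated kernel G integrates the weight ρ back into Cρ. -/
theorem stmt_2 (d : ℕ) (hd : 1 ≤ d) (T r C₁ C₂ : ℝ) (hT : 0 < T) (hr : 0 < r)
    (hC₁ : 0 < C₁) (hC₂ : 0 < C₂)
    (G : ℝ → EuclideanSpace ℝ (Fin d) → EuclideanSpace ℝ (Fin d) → ℝ)
    (hGmeas : ∀ t, 0 < t → t ≤ T → ∀ x, Measurable (G t x))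
    (hGpos : ∀ t, 0 < t → t ≤ T → ∀ x y, 0 ≤ G t x y)
    (hGbd : ∀ t, 0 < t → t ≤ T → ∀ x y,
      G t x y ≤ C₁ * t ^ (-(d : ℝ) / 2) * Real.exp (-C₂ * ‖x - y‖ ^ 2 / t))
    (ρ : EuclideanSpace ℝ (Fin d) → ℝ)
    (hρ : ∀ x, ρ x = 1 / (1 + ‖x‖ ^ r)) :
    ∃ C > 0, ∀ t, 0 < t → t ≤ T → ∀ x,
      ∫ y : EuclideanSpace ℝ (Fin d), G t x y * ρ y ≤ C * ρ x := by
  have ha : (0:ℝ) ≤ Real.sqrt T ^ r := Real.rpow_nonneg (Real.sqrt_nonneg T) r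
  set a : ℝ := Real.sqrt T ^ r with ha_def
  set φ : EuclideanSpace ℝ (Fin d) → ℝ :=
    fun u => (1 + a * ‖u‖ ^ r) * Real.exp (-C₂ * ‖u‖^2) with hφ_def
  have hφint : Integrable φ := phi_integrable d r a C₂ hr ha hC₂
  have hφnn : ∀ u, 0 ≤ φ u := by
    intro u
    have : (0:ℝ) ≤ ‖u‖ ^ r := Real.rpow_nonneg (norm_nonneg u) r
    simp only [hφ_def]
    positivity
  set J : ℝ := ∫ u, φ u with hJ_def
  have hJ0 : 0 ≤ J := integral_nonneg hφnn
  have h2r : (0:ℝ) < 2 ^ r := Real.rpow_pos_of_pos two_pos r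
  refine ⟨C₁ * 2 ^ r * (J + 1), by positivity, ?_⟩
  intro t ht htT x
  have hρnn : ∀ z, 0 ≤ ρ z := by
    intro z
    have : (0:ℝ) ≤ ‖z‖ ^ r := Real.rpow_nonneg (norm_nonneg z) r
    rw [hρ]; positivity
  have hρpos : ∀ z : EuclideanSpace ℝ (Fin d), (0:ℝ) < 1 + ‖z‖ ^ r := by
    intro z
    have : (0:ℝ) ≤ ‖z‖ ^ r := Real.rpow_nonneg (norm_nonneg z) r
    positivity
  have hst : 0 < Real.sqrt t := Real.sqrt_pos.2 ht
  set c : ℝ := (Real.sqrt t)⁻¹ with hc_def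
  have hc0 : 0 < c := inv_pos.2 hst
  have htpow : (0:ℝ) < t ^ (-(d:ℝ)/2) := Real.rpow_pos_of_pos ht _
  set A : ℝ := C₁ * t ^ (-(d:ℝ)/2) * 2 ^ r * ρ x with hA_def
  have hA0 : 0 ≤ A := by
    apply mul_nonneg _ (hρnn x)
    positivity
  -- pointwise bound
  have hpt : ∀ y, G t x y * ρ y ≤ A * φ (c • (x - y)) := by
    intro y
    set w := c • (x - y) with hw_def
    have hxy : x - y = Real.sqrt t • w := by
      rw [hw_def, smul_smul, mul_inv_cancel₀ hst.ne', one_smul]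
    have hnorm : ‖x - y‖ = Real.sqrt t * ‖w‖ := by
      rw [hxy, norm_smul, Real.norm_eq_abs, abs_of_pos hst]
    have hexp : -C₂ * ‖x - y‖ ^ 2 / t = -C₂ * ‖w‖ ^ 2 := by
      rw [hnorm]
      field_simp
      rw [Real.sq_sqrt ht.le]
      ring
    have hpoly : ‖x - y‖ ^ r ≤ a * ‖w‖ ^ r := by
      rw [hnorm, Real.mul_rpow (Real.sqrt_nonneg t) (norm_nonneg w)]
      apply mul_le_mul_of_nonneg_right _ (Real.rpow_nonneg (norm_nonneg w) r)
      exact Real.rpow_le_rpow (Real.sqrt_nonneg t) (Real.sqrt_le_sqrt htT) hr.le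
    have hρy : ρ y ≤ 2 ^ r * (1 + ‖x - y‖ ^ r) * ρ x := by
      have hxle : ‖x‖ ≤ ‖x - y‖ + ‖y‖ := by
        simpa [sub_add_cancel] using norm_add_le (x - y) y
      have key := peetre r hr (norm_nonneg (x - y)) (norm_nonneg y) (norm_nonneg x) hxle
      rw [hρ y, hρ x]
      rw [div_le_iff₀ (hρpos y), mul_one_div, div_mul_eq_mul_div, le_div_iff₀ (hρpos x)]
      nlinarith
    have hGb := hGbd t ht htT x y
    have hexp0 : (0:ℝ) < Real.exp (-C₂ * ‖x - y‖ ^ 2 / t) := Real.exp_pos _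
    calc G t x y * ρ y
        ≤ (C₁ * t ^ (-(d:ℝ)/2) * Real.exp (-C₂ * ‖x - y‖ ^ 2 / t))
            * (2 ^ r * (1 + ‖x - y‖ ^ r) * ρ x) := by
          apply mul_le_mul hGb hρy (hρnn y)
          positivity
      _ = A * ((1 + ‖x - y‖ ^ r) * Real.exp (-C₂ * ‖w‖ ^ 2)) := by
          rw [hA_def, hexp]
          ring
      _ ≤ A * φ w := by
          apply mul_le_mul_of_nonneg_left _ hA0
          simp only [hφ_def]
          apply mul_le_mul_of_nonneg_right _ (Real.exp_pos _).le
          linarith [hpoly]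
  -- integrability of majorant
  have hM : Integrable (fun y => A * φ (c • (x - y))) := by
    have h1 : Integrable (fun z => φ (c • z)) :=
      (integrable_comp_smul_iff volume φ hc0.ne').2 hφint
    exact (h1.comp_sub_left x).const_mul A
  calc ∫ y, G t x y * ρ y
      ≤ ∫ y, A * φ (c • (x - y)) := by
        apply integral_mono_of_nonneg _ hM (Filter.Eventually.of_forall hpt)
        filter_upwards with y
        exact mul_nonneg (hGpos t ht htT x y) (hρnn y)
    _ = A * ∫ y, φ (c • (x - y)) := integral_const_mul _ _
    _ = A * ∫ z, φ (c • z) := by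
        rw [integral_sub_left_eq_self (fun z => φ (c • z)) volume x]
    _ = A * (Real.sqrt t ^ d * J) := by
        rw [Measure.integral_comp_smul volume φ c]
        congr 1
        rw [smul_eq_mul]
        congr 1
        rw [finrank_euclideanSpace_fin, hc_def, inv_pow, inv_inv, abs_of_pos (pow_pos hst d)]
    _ = C₁ * 2 ^ r * J * ρ x := by
        have key : t ^ (-(d:ℝ)/2) * Real.sqrt t ^ d = 1 := by
          rw [Real.sqrt_eq_rpow, ← Real.rpow_natCast (t ^ (1/2:ℝ)) d, ← Real.rpow_mul ht.le,
            ← Real.rpow_add ht]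
          rw [show -(d:ℝ)/2 + 1/2 * (d:ℕ) = 0 by push_cast; ring, Real.rpow_zero]
        calc A * (Real.sqrt t ^ d * J)
            = (t ^ (-(d:ℝ)/2) * Real.sqrt t ^ d) * (C₁ * 2 ^ r * ρ x * J) := by
              rw [hA_def]; ring
          _ = C₁ * 2 ^ r * J * ρ x := by rw [key]; ring
    _ ≤ C₁ * 2 ^ r * (J + 1) * ρ x := by
        apply mul_le_mul_of_nonneg_right _ (hρnn x)
        nlinarith
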